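/- Let (T, M) be a local domain with residue field k, with residue map π : T → k, and let D be an integral domain with fraction field k, viewed as a subring of k. Let A := D ×_k T = π⁻¹(D). Then T, together with the inclusion A → T, is a localization of A; precisely, T = A_M, the localization of A at the prime ideal M of A. -/

import Mathlib

/-- For a local domain `(T, M)` with residue field `k`, residue map `π`, and a subring `D`
of `k` with fraction field `k`, set `A = π⁻¹(D)`. Then `M` is a prime ideal of `A` and
`T`, together with the inclusion `A → T`, is the localization of `A` at the prime `M`. -/
theorem stmt_6 {T k : Type*} [CommRing T] [IsDomain T] [IsLocalRing T] [Field k]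
    (π : T →+* k) (hπ : Function.Surjective π)
    (hker : RingHom.ker π = IsLocalRing.maximalIdeal T)
    (D : Subring k) [IsFractionRing D k] :
    ∃ hp : ((IsLocalRing.maximalIdeal T).comap (D.comap π).subtype).IsPrime,
      @IsLocalization (D.comap π) _
        (@Ideal.primeCompl _ _ ((IsLocalRing.maximalIdeal T).comap (D.comap π).subtype) hp)
        T _ (D.comap π).subtype.toAlgebra := by
  set A := D.comap π with hA
  have hp : ((IsLocalRing.maximalIdeal T).comap A.subtype).IsPrime :=
    Ideal.comap_isPrime _ _
  refine ⟨hp, ?_⟩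
  letI : Algebra A T := A.subtype.toAlgebra
  have halg : ∀ a : A, algebraMap A T a = (a : T) := fun a => rfl
  constructor
  constructor
  · rintro ⟨s, hs⟩
    simp only [Ideal.primeCompl, Ideal.mem_comap] at hs
    have : (s : T) ∉ IsLocalRing.maximalIdeal T := hs
    rw [IsLocalRing.mem_maximalIdeal] at this
    simpa [halg] using not_not.mp (by simpa [mem_nonunits_iff] using this)
  · intro z
    obtain ⟨⟨d, s⟩, h⟩ := IsLocalization.surj (nonZeroDivisors D) (π z)
    obtain ⟨s', hs'⟩ := hπ (s : k)
    have hs'A : s' ∈ A := by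
      simp [hA, Subring.mem_comap, hs', SetLike.coe_mem]
    have hzA : z * s' ∈ A := by
      simp only [hA, Subring.mem_comap, map_mul, hs']
      have : π z * (s : k) = (d : k) := h
      rw [this]; exact SetLike.coe_mem d
    have hsne : (s : k) ≠ 0 := by
      have := nonZeroDivisors.coe_ne_zero s
      exact fun h0 => this (Subtype.ext (by exact_mod_cast h0))
    have hsM : s' ∉ IsLocalRing.maximalIdeal T := by
      rw [← hker, RingHom.mem_ker, hs']
      exact hsne
    refine ⟨⟨⟨z * s', hzA⟩, ⟨⟨s', hs'A⟩, ?_⟩⟩, ?_⟩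
    · simpa [Ideal.primeCompl, Ideal.mem_comap] using hsM
    · rfl
  · intro a₁ a₂ h
    refine ⟨1, ?_⟩
    have : a₁ = a₂ := Subtype.ext h
    rw [this]
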